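/- Let (T, 𝒯) be a measurable space and (Ω, ℱ, P) a probability space. Let u_i : T × Ω → ℝ, i ∈ ℕ, be jointly measurable functions and u : T × Ω → ℝ a function such that for every t ∈ T the sequence of random variables u_i(t,·) converges to u(t,·) in probability (i.e., in P-measure) as i → ∞. Then there exists a jointly measurable function ũ : T × Ω → ℝ such that for every t ∈ T, ũ(t,·) = u(t,·) P-almost surely. -/

import Mathlib

open MeasureTheory Filter Set
open scoped ENNReal Topology

/-- Let `(T, 𝒯)` be a measurable space and `(Ω, ℱ, P)` a probability space.  Let
`u_i : T × Ω → ℝ` be jointly measurable and `u : T × Ω → ℝ` be such that for every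
`t ∈ T` the random variables `u_i(t,·)` converge to `u(t,·)` in probability as
`i → ∞`.  Then there exists a jointly measurable `ũ : T × Ω → ℝ` such that for every
`t ∈ T`, `ũ(t,·) = u(t,·)` `P`-almost surely. -/
theorem statement9
    {T : Type*} [MeasurableSpace T]
    {Ω : Type*} [MeasurableSpace Ω] (P : Measure Ω) [IsProbabilityMeasure P]
    (u : ℕ → T × Ω → ℝ) (hu_meas : ∀ i, Measurable (u i))
    (ulim : T × Ω → ℝ)
    (hconv : ∀ t : T,
      TendstoInMeasure P (fun i ω => u i (t, ω)) atTop (fun ω => ulim (t, ω))) :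
    ∃ utilde : T × Ω → ℝ, Measurable utilde ∧
      ∀ t : T, ∀ᵐ ω ∂P, utilde (t, ω) = ulim (t, ω) := by
  classical
  -- the "good index" predicate: Cauchy in measure at level 2⁻¹ ^ k from index n on
  set good : ℕ → T → ℕ → Prop := fun k t n =>
    ∀ m ≥ n, ∀ l ≥ n,
      P {ω | (2:ℝ)⁻¹ ^ k ≤ dist (u m (t, ω)) (u l (t, ω))} ≤ (2:ℝ≥0∞)⁻¹ ^ k with hgood
  have hq_meas : ∀ (k m l : ℕ), Measurable (fun t : T =>
      P {ω | (2:ℝ)⁻¹ ^ k ≤ dist (u m (t, ω)) (u l (t, ω))}) := by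
    intro k m l
    have hs : MeasurableSet {p : T × Ω | (2:ℝ)⁻¹ ^ k ≤ dist (u m p) (u l p)} :=
      measurableSet_le measurable_const ((hu_meas m).dist (hu_meas l))
    exact measurable_measure_prodMk_left (ν := P) hs
  have hgood_meas : ∀ k n, MeasurableSet {t | good k t n} := by
    intro k n
    have : {t | good k t n} = ⋂ m, ⋂ (_ : m ≥ n), ⋂ l, ⋂ (_ : l ≥ n),
        {t | P {ω | (2:ℝ)⁻¹ ^ k ≤ dist (u m (t, ω)) (u l (t, ω))} ≤ (2:ℝ≥0∞)⁻¹ ^ k} := by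
      ext t; simp [hgood]
    rw [this]
    refine MeasurableSet.iInter fun m => MeasurableSet.iInter fun _ =>
      MeasurableSet.iInter fun l => MeasurableSet.iInter fun _ => ?_
    exact measurableSet_le (hq_meas k m l) measurable_const
  -- existence of good indices, from convergence in measure
  have hgood_ex : ∀ k t, ∃ n, good k t n := by
    intro k t
    have hε : (0:ℝ) < (2:ℝ)⁻¹ ^ (k+1) := by positivity
    have := (tendstoInMeasure_iff_dist.mp (hconv t)) ((2:ℝ)⁻¹ ^ (k+1)) hε
    rw [ENNReal.tendsto_atTop_zero] at this
    obtain ⟨N, hN⟩ := this ((2:ℝ≥0∞)⁻¹ ^ (k+1))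
      (pos_iff_ne_zero.mpr (by simp [pow_eq_zero_iff]))
    refine ⟨N, fun m hm l hl => ?_⟩
    have hsub : {ω | (2:ℝ)⁻¹ ^ k ≤ dist (u m (t, ω)) (u l (t, ω))} ⊆
        {ω | (2:ℝ)⁻¹ ^ (k+1) ≤ dist (u m (t, ω)) (ulim (t, ω))} ∪
        {ω | (2:ℝ)⁻¹ ^ (k+1) ≤ dist (u l (t, ω)) (ulim (t, ω))} := by
      intro ω hω
      by_contra hc
      simp only [mem_union, mem_setOf_eq, not_or, not_le] at hc
      have htri : dist (u m (t, ω)) (u l (t, ω)) ≤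
          dist (u m (t, ω)) (ulim (t, ω)) + dist (u l (t, ω)) (ulim (t, ω)) :=
        dist_triangle_right _ _ _
      have hω' : (2:ℝ)⁻¹ ^ k ≤ dist (u m (t, ω)) (u l (t, ω)) := hω
      have heq : (2:ℝ)⁻¹ ^ (k+1) + (2:ℝ)⁻¹ ^ (k+1) = (2:ℝ)⁻¹ ^ k := by ring
      nlinarith [hc.1, hc.2]
    calc P {ω | (2:ℝ)⁻¹ ^ k ≤ dist (u m (t, ω)) (u l (t, ω))}
        ≤ P {ω | (2:ℝ)⁻¹ ^ (k+1) ≤ dist (u m (t, ω)) (ulim (t, ω))} +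
          P {ω | (2:ℝ)⁻¹ ^ (k+1) ≤ dist (u l (t, ω)) (ulim (t, ω))} :=
          (measure_mono hsub).trans (measure_union_le _ _)
      _ ≤ (2:ℝ≥0∞)⁻¹ ^ (k+1) + (2:ℝ≥0∞)⁻¹ ^ (k+1) := add_le_add (hN m hm) (hN l hl)
      _ = (2:ℝ≥0∞)⁻¹ ^ k := by
          rw [pow_succ, ← mul_add, ENNReal.inv_two_add_inv_two, mul_one]
  -- measurable choice of good indices
  set N : ℕ → T → ℕ := fun k t => Nat.find (hgood_ex k t) with hN
  have hN_meas : ∀ k, Measurable (N k) := by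
    intro k
    exact measurable_find (fun t => hgood_ex k t) (fun n => hgood_meas k n)
  have hN_spec : ∀ k t, good k t (N k t) := fun k t => Nat.find_spec (hgood_ex k t)
  -- a monotone measurable sequence of indices
  set M : ℕ → T → ℕ := fun k => Nat.rec (N 0) (fun k Mk t => max (N (k+1) t) (Mk t) + 1) k with hM
  have hM_succ : ∀ k t, M (k+1) t = max (N (k+1) t) (M k t) + 1 := fun k t => rfl
  have hM_meas : ∀ k, Measurable (M k) := by
    intro k
    induction k with
    | zero => exact hN_meas 0
    | succ k ih => exact (((hN_meas (k+1)).max ih).add_const 1)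
  have hM_ge_N : ∀ k t, N k t ≤ M k t := by
    intro k t
    cases k with
    | zero => exact le_rfl
    | succ k => exact le_trans (le_max_left _ _) (Nat.le_succ _)
  have hM_lt_succ : ∀ k t, M k t < M (k+1) t := by
    intro k t
    exact Nat.lt_succ_of_le (le_max_right _ _)
  have hM_ge_self : ∀ k t, k ≤ M k t := by
    intro k t
    induction k with
    | zero => exact Nat.zero_le _
    | succ k ih => exact Nat.succ_le_of_lt (lt_of_le_of_lt ih (hM_lt_succ k t))
  -- the auxiliary sequence
  set v : ℕ → T × Ω → ℝ := fun k p => u (M k p.1) p with hv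
  have hv_meas : ∀ k, Measurable (v k) := by
    intro k
    have hF : Measurable (fun q : (T × Ω) × ℕ => u q.2 q.1) :=
      measurable_from_prod_countable_left fun n => hu_meas n
    exact hF.comp (measurable_id.prodMk ((hM_meas k).comp measurable_fst))
  -- the set where v converges
  set G : Set (T × Ω) := {p | ∃ c, Tendsto (fun k => v k p) atTop (𝓝 c)} with hG
  have hG_meas : MeasurableSet G := measurableSet_exists_tendsto hv_meas
  set w : ℕ → T × Ω → ℝ := fun k => G.indicator (v k) with hw
  have hw_meas : ∀ k, Measurable (w k) := fun k => (hv_meas k).indicator hG_meas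
  set utilde : T × Ω → ℝ := fun p => limUnder atTop (fun k => w k p) with hut
  have hw_tendsto : ∀ p, Tendsto (fun k => w k p) atTop (𝓝 (utilde p)) := by
    intro p
    refine tendsto_nhds_limUnder ?_
    by_cases hp : p ∈ G
    · have hval : ∀ k, w k p = v k p := fun k => indicator_of_mem hp _
      obtain ⟨c, hc⟩ := hp
      exact ⟨c, hc.congr fun k => (hval k).symm⟩
    · have hval : ∀ k, w k p = 0 := fun k => indicator_of_notMem hp _
      refine ⟨0, ?_⟩
      have : (fun k => w k p) = fun _ => (0:ℝ) := funext hval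
      rw [this]
      exact tendsto_const_nhds
  have hut_meas : Measurable utilde :=
    measurable_of_tendsto_metrizable' atTop hw_meas (tendsto_pi_nhds.mpr hw_tendsto)
  refine ⟨utilde, hut_meas, fun t => ?_⟩
  -- Borel–Cantelli: for a.e. ω, the sequence k ↦ v k (t, ω) is Cauchy
  set E : ℕ → Set Ω := fun k =>
    {ω | (2:ℝ)⁻¹ ^ k ≤ dist (u (M (k+1) t) (t, ω)) (u (M k t) (t, ω))} with hE
  have hE_le : ∀ k, P (E k) ≤ (2:ℝ≥0∞)⁻¹ ^ k := fun k =>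
    hN_spec k t (M (k+1) t) (le_trans (hM_ge_N k t) (le_of_lt (hM_lt_succ k t)))
      (M k t) (hM_ge_N k t)
  have hsum : (∑' k, P (E k)) ≠ ∞ := by
    refine ne_top_of_le_ne_top ?_ (ENNReal.tsum_le_tsum hE_le)
    simpa only [ENNReal.tsum_geometric, ENNReal.one_sub_inv_two, inv_inv] using ENNReal.ofNat_ne_top
  have hBC : ∀ᵐ ω ∂P, ∀ᶠ k in atTop, ω ∉ E k := ae_eventually_notMem hsum
  have hcauchy : ∀ᵐ ω ∂P, ∃ c, Tendsto (fun k => v k (t, ω)) atTop (𝓝 c) := by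
    filter_upwards [hBC] with ω hω
    obtain ⟨K, hK⟩ := eventually_atTop.mp hω
    have hc : CauchySeq (fun k => v k (t, ω)) := by
      set d : ℕ → ℝ := fun k => if k < K then dist (v k (t, ω)) (v (k+1) (t, ω)) else (2:ℝ)⁻¹ ^ k
        with hd
      have hdd : ∀ k, dist (v k (t, ω)) (v (k+1) (t, ω)) ≤ d k := by
        intro k
        by_cases hk : k < K
        · simp [hd, hk]
        · push_neg at hk
          have := hK k hk
          simp only [hE, mem_setOf_eq, not_le] at this
          simp only [hd, if_neg (not_lt.mpr hk)]
          rw [dist_comm]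
          exact le_of_lt this
      have hds : Summable d := by
        rw [← summable_nat_add_iff K]
        have : (fun n => d (n + K)) = fun n => (2:ℝ)⁻¹ ^ (n + K) := by
          funext n
          simp [hd, Nat.not_lt.mpr (Nat.le_add_left K n)]
        rw [this]
        exact ((summable_geometric_of_lt_one (r := (2:ℝ)⁻¹) (by norm_num)
          (by norm_num)).mul_right ((2:ℝ)⁻¹ ^ K)).congr (fun n => by rw [pow_add])
      exact cauchySeq_of_dist_le_of_summable d hdd hds
    exact cauchySeq_tendsto_of_complete hc
  -- on this a.e. set, v k (t, ·) → utilde (t, ·)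
  have hv_to_ut : ∀ᵐ ω ∂P, Tendsto (fun k => v k (t, ω)) atTop (𝓝 (utilde (t, ω))) := by
    filter_upwards [hcauchy] with ω hω
    have hmem : (t, ω) ∈ G := hω
    have := hw_tendsto (t, ω)
    have heq : ∀ k, w k (t, ω) = v k (t, ω) := fun k => indicator_of_mem hmem _
    simpa [funext heq] using this
  -- v k (t, ·) → ulim (t, ·) in measure
  have hv_inmeas : TendstoInMeasure P (fun k ω => v k (t, ω)) atTop (fun ω => ulim (t, ω)) := by
    intro ε hε
    have hMt : Tendsto (fun k => M k t) atTop atTop :=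
      tendsto_atTop_mono (fun k => hM_ge_self k t) tendsto_id
    have h := (hconv t ε hε).comp hMt
    simp only [Function.comp] at h
    simp only [hv]
    exact h
  obtain ⟨ns, hns_mono, hns_ae⟩ := hv_inmeas.exists_seq_tendsto_ae
  filter_upwards [hv_to_ut, hns_ae] with ω h1 h2
  exact tendsto_nhds_unique (h1.comp hns_mono.tendsto_atTop) h2
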